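/- Suppose f is C² and f''(s) > 0 for all s (or f''(s) < 0 for all s). Then for every u ∈ X and every φ ∈ X with φ(t) > 0 on (0,π), one has DW(u)(π)·φ ≠ 0 (strictly negative if f''>0, strictly positive if f''<0). Consequently every nonempty level set M_θ = {u ∈ X : W(u)(π) = θ} is a C² codimension-one submanifold of X. -/
import Mathlib

open Real Set intervalIntegral

/-- Auxiliary: a continuous nonnegative weight, positive on the interior, times `v ^ 2`
where `v 0 = 0` and `v` has derivative `1` at `0`, has positive integral over `[0, π]`. -/
lemma aux_int_pos (w v : ℝ → ℝ)
    (hw : ContinuousOn w (Icc 0 π))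
    (hwnn : ∀ t ∈ Icc (0:ℝ) π, 0 ≤ w t)
    (hwpos : ∀ t ∈ Ioo (0:ℝ) π, 0 < w t)
    (hvc : ContinuousOn v (Icc 0 π))
    (hv0 : v 0 = 0)
    (hslope : HasDerivWithinAt v 1 (Icc 0 π) 0) :
    0 < ∫ r in (0:ℝ)..π, w r * v r ^ 2 := by
  have hπ : (0:ℝ) < π := Real.pi_pos
  -- find δ > 0 with v t > 0 on (0, δ)
  have hs := hasDerivWithinAt_iff_tendsto_slope.1 hslope
  have hev : ∀ᶠ t in nhdsWithin 0 (Icc 0 π \ {0}), 0 < slope v 0 t :=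
    hs.eventually (eventually_gt_nhds one_pos)
  obtain ⟨ε, hε, hball⟩ := Metric.nhdsWithin_basis_ball.eventually_iff.1 hev
  set c : ℝ := min ε π with hc
  have hc0 : 0 < c := lt_min hε hπ
  have hcπ : c ≤ π := min_le_right _ _
  have hvpos : ∀ t ∈ Ioo (0:ℝ) c, 0 < v t := by
    intro t ht
    have ht0 : (0:ℝ) < t := ht.1
    have htc : t < c := ht.2
    have hmem : t ∈ Icc (0:ℝ) π \ {0} :=
      ⟨⟨ht0.le, le_trans htc.le hcπ⟩, by simp [ht0.ne']⟩
    have hd : dist t 0 < ε := by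
      rw [Real.dist_eq, sub_zero, abs_of_pos ht0]
      exact lt_of_lt_of_le htc (min_le_left _ _)
    have hsp := hball (Set.mem_inter (Metric.mem_ball.2 hd) hmem)
    rw [slope_def_field, hv0, sub_zero, sub_zero] at hsp
    have := mul_pos hsp ht0
    rwa [div_mul_cancel₀ _ ht0.ne'] at this
  -- split the integral at c
  have hgc : ContinuousOn (fun r => w r * v r ^ 2) (Icc 0 π) :=
    hw.mul (hvc.pow 2)
  have hint1 : IntervalIntegrable (fun r => w r * v r ^ 2) MeasureTheory.volume 0 c := by
    apply (hgc.mono ?_).intervalIntegrable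
    rw [uIcc_of_le hc0.le]
    exact Icc_subset_Icc le_rfl hcπ
  have hint2 : IntervalIntegrable (fun r => w r * v r ^ 2) MeasureTheory.volume c π := by
    apply (hgc.mono ?_).intervalIntegrable
    rw [uIcc_of_le hcπ]
    exact Icc_subset_Icc hc0.le le_rfl
  have h1 : 0 < ∫ r in (0:ℝ)..c, w r * v r ^ 2 := by
    apply intervalIntegral.intervalIntegral_pos_of_pos_on hint1 _ hc0
    intro x hx
    have hx' : x ∈ Ioo (0:ℝ) π := ⟨hx.1, lt_of_lt_of_le hx.2 hcπ⟩
    exact mul_pos (hwpos x hx') (pow_pos (hvpos x hx) 2)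
  have h2 : 0 ≤ ∫ r in c..π, w r * v r ^ 2 := by
    apply intervalIntegral.integral_nonneg hcπ
    intro x hx
    exact mul_nonneg (hwnn x ⟨le_trans hc0.le hx.1, hx.2⟩) (sq_nonneg _)
  have := intervalIntegral.integral_add_adjacent_intervals hint1 hint2
  rw [← this]
  linarith


/-- Auxiliary: the linearized solution has nonvanishing "energy" at `π`. -/
lemma aux_energy (f u v v' : ℝ → ℝ)
    (hfc : Continuous (deriv f))
    (hu : ContinuousOn u (Icc 0 π))
    (hv : ∀ t ∈ Icc (0:ℝ) π, HasDerivWithinAt v (v' t) (Icc 0 π) t)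
    (hv' : ∀ t ∈ Icc (0:ℝ) π, HasDerivWithinAt v' (deriv f (u t) * v t) (Icc 0 π) t)
    (hv0 : v 0 = 0) (hv'0 : v' 0 = 1) :
    0 < v π ^ 2 + v' π ^ 2 := by
  have hπ : (0:ℝ) < π := Real.pi_pos
  by_contra hcon
  push_neg at hcon
  have hEπ : v π ^ 2 + v' π ^ 2 = 0 :=
    le_antisymm hcon (by positivity)
  obtain ⟨C, hC⟩ := isCompact_Icc.exists_bound_of_continuousOn
    (hfc.comp_continuousOn hu)
  set E : ℝ → ℝ := fun t => v t * v t + v' t * v' t with hEdef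
  set e' : ℝ → ℝ := fun t => (v' t * v t + v t * v' t) +
      ((deriv f (u t) * v t) * v' t + v' t * (deriv f (u t) * v t)) with he'def
  have hE : ∀ t ∈ Icc (0:ℝ) π, HasDerivWithinAt E (e' t) (Icc 0 π) t :=
    fun t ht => ((hv t ht).mul (hv t ht)).add ((hv' t ht).mul (hv' t ht))
  have hEc : ContinuousOn E (Icc 0 π) := fun t ht => (hE t ht).continuousWithinAt
  have hmaps : MapsTo (fun s : ℝ => π - s) (Icc 0 π) (Icc 0 π) := by
    intro x hx
    rw [mem_Icc] at hx
    show π - x ∈ Icc 0 π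
    rw [mem_Icc]
    constructor <;> linarith [hx.1, hx.2]
  set F : ℝ → ℝ := fun t => E (π - t) with hFdef
  have hFc : ContinuousOn F (Icc 0 π) :=
    hEc.comp ((continuous_const.sub continuous_id).continuousOn) hmaps
  have hF' : ∀ t ∈ Ico (0:ℝ) π,
      HasDerivWithinAt F (e' (π - t) * (-1)) (Ici t) t := by
    intro t ht
    have hts : π - t ∈ Icc (0:ℝ) π := ⟨by linarith [ht.2], by linarith [ht.1]⟩
    have h1 : HasDerivWithinAt (fun s : ℝ => π - s) (-1) (Icc 0 π) t :=
      (hasDerivWithinAt_id t _).const_sub π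
    have h2 : HasDerivWithinAt F (e' (π - t) * (-1)) (Icc 0 π) t :=
      HasDerivWithinAt.comp t (hE _ hts) h1 hmaps
    refine h2.mono_of_mem_nhdsWithin ?_
    refine Filter.mem_of_superset
      (Filter.inter_mem self_mem_nhdsWithin
        (mem_nhdsWithin_of_mem_nhds (Iio_mem_nhds ht.2))) ?_
    intro x hx
    exact ⟨le_trans ht.1 hx.1, hx.2.le⟩
  have hC0 : 0 ≤ C := le_trans (norm_nonneg _) (hC 0 ⟨le_rfl, hπ.le⟩)
  have hbound : ∀ t ∈ Ico (0:ℝ) π,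
      ‖e' (π - t) * (-1)‖ ≤ (1 + C) * ‖F t‖ + 0 := by
    intro t ht
    have hts : π - t ∈ Icc (0:ℝ) π := ⟨by linarith [ht.2], by linarith [ht.1]⟩
    have hd := hC (π - t) hts
    rw [Real.norm_eq_abs] at hd
    have hd1 : deriv f (u (π - t)) ≤ C := (abs_le.1 hd).2
    have hd2 : -C ≤ deriv f (u (π - t)) := (abs_le.1 hd).1
    have hFnn : 0 ≤ F t := by
      have := mul_self_nonneg (v (π - t))
      have := mul_self_nonneg (v' (π - t))
      simp only [hFdef, hEdef]
      linarith
    rw [norm_mul, norm_neg, norm_one, mul_one, Real.norm_eq_abs,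
      Real.norm_eq_abs, abs_of_nonneg hFnn, add_zero]
    simp only [hFdef, hEdef, he'def]
    set a := v (π - t)
    set b := v' (π - t)
    set d := deriv f (u (π - t))
    rw [abs_le]
    constructor
    · nlinarith [mul_nonneg (sub_nonneg.2 hd1) (sq_nonneg (a + b)),
        mul_nonneg (sub_nonneg.2 hd1) (sq_nonneg (a - b)),
        mul_nonneg (by linarith : (0:ℝ) ≤ C + d) (sq_nonneg (a + b)),
        mul_nonneg (by linarith : (0:ℝ) ≤ C + d) (sq_nonneg (a - b)),
        sq_nonneg (a + b), sq_nonneg (a - b)]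
    · nlinarith [mul_nonneg (sub_nonneg.2 hd1) (sq_nonneg (a + b)),
        mul_nonneg (sub_nonneg.2 hd1) (sq_nonneg (a - b)),
        mul_nonneg (by linarith : (0:ℝ) ≤ C + d) (sq_nonneg (a + b)),
        mul_nonneg (by linarith : (0:ℝ) ≤ C + d) (sq_nonneg (a - b)),
        sq_nonneg (a + b), sq_nonneg (a - b)]
  have hF0 : ‖F 0‖ ≤ 0 := by
    have : F 0 = 0 := by
      simp only [hFdef, hEdef, sub_zero]
      nlinarith [hEπ]
    rw [this, norm_zero]
  have hg := norm_le_gronwallBound_of_norm_deriv_right_le hFc hF' hF0 hbound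
    π (right_mem_Icc.2 hπ.le)
  rw [gronwallBound_ε0_δ0] at hg
  have hFπ : F π = 1 := by
    simp only [hFdef, hEdef, sub_self, hv0, hv'0]
    ring
  rw [hFπ, norm_one] at hg
  linarith

theorem prufer_derivative_sign (f u φ v v' : ℝ → ℝ)
    (hf : ContDiff ℝ 2 f)
    (hu : ContinuousOn u (Icc 0 π))
    (hφ : ContinuousOn φ (Icc 0 π)) (hφpos : ∀ t ∈ Ioo (0:ℝ) π, 0 < φ t)
    (hv : ∀ t ∈ Icc (0:ℝ) π, HasDerivWithinAt v (v' t) (Icc 0 π) t)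
    (hv' : ∀ t ∈ Icc (0:ℝ) π, HasDerivWithinAt v' (deriv f (u t) * v t) (Icc 0 π) t)
    (hv0 : v 0 = 0) (hv'0 : v' 0 = 1) :
    ((∀ s : ℝ, 0 < deriv (deriv f) s) →
      -(v π ^ 2 + v' π ^ 2)⁻¹ *
        (∫ r in (0:ℝ)..π, deriv (deriv f) (u r) * φ r * v r ^ 2) < 0) ∧
    ((∀ s : ℝ, deriv (deriv f) s < 0) →
      0 < -(v π ^ 2 + v' π ^ 2)⁻¹ *
        (∫ r in (0:ℝ)..π, deriv (deriv f) (u r) * φ r * v r ^ 2)) := by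
  have hπ : (0:ℝ) < π := Real.pi_pos
  have hf1 : ContDiff ℝ 1 (deriv f) := by
    have h : ContDiff ℝ (1 + 1) f := by
      have : ((1:WithTop ℕ∞) + 1) = 2 := by norm_num
      rw [this]; exact hf
    exact (contDiff_succ_iff_deriv.mp h).2.2
  have hf''c : Continuous (deriv (deriv f)) := hf1.continuous_deriv le_rfl
  have hf'c : Continuous (deriv f) := hf.continuous_deriv (by norm_num)
  have hE := aux_energy f u v v' hf'c hu hv hv' hv0 hv'0
  have hAneg : -(v π ^ 2 + v' π ^ 2)⁻¹ < 0 := neg_lt_zero.2 (inv_pos.2 hE)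
  have hφnn : ∀ t ∈ Icc (0:ℝ) π, 0 ≤ φ t := by
    intro t ht
    have hcl : t ∈ closure (Ioo (0:ℝ) π) := by
      rw [closure_Ioo hπ.ne]; exact ht
    haveI hne : (nhdsWithin t (Ioo (0:ℝ) π)).NeBot :=
      mem_closure_iff_nhdsWithin_neBot.1 hcl
    have htend : Filter.Tendsto φ (nhdsWithin t (Ioo 0 π)) (nhds (φ t)) :=
      (hφ t ht).mono Ioo_subset_Icc_self
    exact ge_of_tendsto htend
      (Filter.eventually_of_mem self_mem_nhdsWithin (fun x hx => (hφpos x hx).le))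
  have hvc : ContinuousOn v (Icc 0 π) := fun t ht => (hv t ht).continuousWithinAt
  have hslope : HasDerivWithinAt v 1 (Icc 0 π) 0 :=
    hv'0 ▸ hv 0 ⟨le_rfl, hπ.le⟩
  constructor
  · intro hpos
    have hI : 0 < ∫ r in (0:ℝ)..π, (deriv (deriv f) (u r) * φ r) * v r ^ 2 := by
      apply aux_int_pos (fun r => deriv (deriv f) (u r) * φ r) v
        ((hf''c.comp_continuousOn hu).mul hφ)
        (fun t ht => mul_nonneg (hpos (u t)).le (hφnn t ht))
        (fun t ht => mul_pos (hpos (u t)) (hφpos t ht)) hvc hv0 hslope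
    exact mul_neg_of_neg_of_pos hAneg hI
  · intro hneg
    have hI : 0 < ∫ r in (0:ℝ)..π, (-deriv (deriv f) (u r) * φ r) * v r ^ 2 := by
      apply aux_int_pos (fun r => -deriv (deriv f) (u r) * φ r) v
        (((hf''c.comp_continuousOn hu).neg).mul hφ)
        (fun t ht => mul_nonneg (by linarith [hneg (u t)]) (hφnn t ht))
        (fun t ht => mul_pos (by linarith [hneg (u t)]) (hφpos t ht)) hvc hv0 hslope
    have heq : (∫ r in (0:ℝ)..π, deriv (deriv f) (u r) * φ r * v r ^ 2)
        = -∫ r in (0:ℝ)..π, (-deriv (deriv f) (u r) * φ r) * v r ^ 2 := by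
      rw [← intervalIntegral.integral_neg]
      congr 1
      funext r
      ring
    rw [heq]
    have := mul_pos_of_neg_of_neg hAneg (neg_neg_iff_pos.2 hI)
    exact this
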